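/- For the generalized linear program max z subject to (∑_{h=r}^{K_{ij}} 1/h)·z ≤ t_i s_{ij} w_{ijr} for all (i,j,r), ∑_{i,j,r} c_{ijr} w_{ijr} = 1, and w_{ijr} ≥ 0 (with c_{ijr} ≥ 1 integers and positive parameters t_i, s_{ij}), the optimal value is z* = 1/(∑_{i,j,r} c_{ijr}(∑_{h=r}^{K_{ij}}1/h)/(t_i s_{ij})), attained at w*_{ijr} = (∑_{h=r}^{K_{ij}}1/h) z*/(t_i s_{ij}); i.e., any feasible (z, w) satisfies z ≤ z*, and the stated (z*, w*) is feasible. -/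

import Mathlib

open Finset

theorem stmt_10_Dpos (I J : ℕ) (hI : 0 < I) (hJ : 0 < J)
    (Kij : ℕ → ℕ → ℕ) (hKij : ∀ i j, 0 < Kij i j)
    (t : ℕ → ℝ) (s : ℕ → ℕ → ℝ) (ht : ∀ i, 0 < t i) (hs : ∀ i j, 0 < s i j)
    (c : ℕ → ℕ → ℕ → ℕ) (hc : ∀ i j r, 1 ≤ c i j r) :
    0 < (∑ i ∈ Finset.Icc 1 I, ∑ j ∈ Finset.Icc 1 J,
      ∑ r ∈ Finset.Icc 1 (Kij i j),
        (c i j r : ℝ) * (∑ h ∈ Finset.Icc r (Kij i j), (1 : ℝ) / h) / (t i * s i j)) := by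
  apply Finset.sum_pos _ ⟨1, by simp [Finset.mem_Icc]; omega⟩
  intro i _
  apply Finset.sum_pos _ ⟨1, by simp [Finset.mem_Icc]; omega⟩
  intro j _
  apply Finset.sum_pos _ ⟨1, by simp [Finset.mem_Icc]; exact hKij i j⟩
  intro r hr
  simp only [Finset.mem_Icc] at hr
  have hH : 0 < ∑ h ∈ Finset.Icc r (Kij i j), (1 : ℝ) / h := by
    apply Finset.sum_pos
    · intro h hh
      simp only [Finset.mem_Icc] at hh
      have hh0 : 0 < (h : ℝ) := by exact_mod_cast Nat.lt_of_lt_of_le hr.1 hh.1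
      exact div_pos one_pos hh0
    · exact ⟨r, Finset.mem_Icc.mpr ⟨le_refl r, hr.2⟩⟩
  have h1 := ht i; have h2 := hs i j
  have hc' : (0:ℝ) < c i j r := by exact_mod_cast hc i j r
  exact div_pos (mul_pos hc' hH) (mul_pos h1 h2)

/-- Analytical solution of the reformulated OPA linear program: the stated value
`zstar` is an upper bound for all feasible solutions and is attained at `wstar`. -/
theorem stmt_10 (I J : ℕ) (hI : 0 < I) (hJ : 0 < J)
    (Kij : ℕ → ℕ → ℕ) (hKij : ∀ i j, 0 < Kij i j)
    (t : ℕ → ℝ) (s : ℕ → ℕ → ℝ) (ht : ∀ i, 0 < t i) (hs : ∀ i j, 0 < s i j)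
    (c : ℕ → ℕ → ℕ → ℕ) (hc : ∀ i j r, 1 ≤ c i j r)
    (zstar : ℝ)
    (hzstar : zstar = 1 / (∑ i ∈ Finset.Icc 1 I, ∑ j ∈ Finset.Icc 1 J,
      ∑ r ∈ Finset.Icc 1 (Kij i j),
        (c i j r : ℝ) * (∑ h ∈ Finset.Icc r (Kij i j), (1 : ℝ) / h) / (t i * s i j)))
    (wstar : ℕ → ℕ → ℕ → ℝ)
    (hwstar : ∀ i j r, wstar i j r =
      (∑ h ∈ Finset.Icc r (Kij i j), (1 : ℝ) / h) * zstar / (t i * s i j)) :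
    (∀ (z : ℝ) (w : ℕ → ℕ → ℕ → ℝ),
      (∀ i ∈ Finset.Icc 1 I, ∀ j ∈ Finset.Icc 1 J, ∀ r ∈ Finset.Icc 1 (Kij i j),
        (∑ h ∈ Finset.Icc r (Kij i j), (1 : ℝ) / h) * z ≤ t i * s i j * w i j r) →
      (∑ i ∈ Finset.Icc 1 I, ∑ j ∈ Finset.Icc 1 J, ∑ r ∈ Finset.Icc 1 (Kij i j),
        (c i j r : ℝ) * w i j r = 1) →
      (∀ i j r, 0 ≤ w i j r) →
      z ≤ zstar) ∧
    ((∀ i ∈ Finset.Icc 1 I, ∀ j ∈ Finset.Icc 1 J, ∀ r ∈ Finset.Icc 1 (Kij i j),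
        (∑ h ∈ Finset.Icc r (Kij i j), (1 : ℝ) / h) * zstar ≤ t i * s i j * wstar i j r) ∧
      (∑ i ∈ Finset.Icc 1 I, ∑ j ∈ Finset.Icc 1 J, ∑ r ∈ Finset.Icc 1 (Kij i j),
        (c i j r : ℝ) * wstar i j r = 1) ∧
      (∀ i j r, 0 ≤ wstar i j r)) := by
  have hD : 0 < (∑ i ∈ Finset.Icc 1 I, ∑ j ∈ Finset.Icc 1 J,
      ∑ r ∈ Finset.Icc 1 (Kij i j),
        (c i j r : ℝ) * (∑ h ∈ Finset.Icc r (Kij i j), (1 : ℝ) / h) / (t i * s i j)) :=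
    stmt_10_Dpos I J hI hJ Kij hKij t s ht hs c hc
  have hzpos : 0 < zstar := by rw [hzstar]; exact div_pos one_pos hD
  constructor
  · intro z w hcon hsum hnn
    rw [hzstar, le_div_iff₀ hD]
    calc z * (∑ i ∈ Finset.Icc 1 I, ∑ j ∈ Finset.Icc 1 J,
          ∑ r ∈ Finset.Icc 1 (Kij i j),
            (c i j r : ℝ) * (∑ h ∈ Finset.Icc r (Kij i j), (1 : ℝ) / h) / (t i * s i j))
        = ∑ i ∈ Finset.Icc 1 I, ∑ j ∈ Finset.Icc 1 J, ∑ r ∈ Finset.Icc 1 (Kij i j),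
            z * ((c i j r : ℝ) * (∑ h ∈ Finset.Icc r (Kij i j), (1 : ℝ) / h) / (t i * s i j)) := by
          simp [Finset.mul_sum]
      _ ≤ ∑ i ∈ Finset.Icc 1 I, ∑ j ∈ Finset.Icc 1 J, ∑ r ∈ Finset.Icc 1 (Kij i j),
            (c i j r : ℝ) * w i j r := by
          apply Finset.sum_le_sum; intro i hi
          apply Finset.sum_le_sum; intro j hj
          apply Finset.sum_le_sum; intro r hr
          have key := hcon i hi j hj r hr
          have hts : 0 < t i * s i j := mul_pos (ht i) (hs i j)
          have hcr : (0:ℝ) ≤ c i j r := Nat.cast_nonneg _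
          calc z * ((c i j r : ℝ) * (∑ h ∈ Finset.Icc r (Kij i j), (1 : ℝ) / h) / (t i * s i j))
              = (c i j r : ℝ) * ((∑ h ∈ Finset.Icc r (Kij i j), (1 : ℝ) / h) * z) / (t i * s i j) := by
                ring
            _ ≤ (c i j r : ℝ) * (t i * s i j * w i j r) / (t i * s i j) := by gcongr
            _ = (c i j r : ℝ) * w i j r := by rw [mul_div_assoc, mul_div_cancel_left₀ _ hts.ne']
      _ = 1 := hsum
  · refine ⟨?_, ?_, ?_⟩
    · intro i hi j hj r hr
      have hts : (t i * s i j) ≠ 0 := ne_of_gt (mul_pos (ht i) (hs i j))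
      rw [hwstar, mul_div_cancel₀ _ hts]
    · have heq : (∑ i ∈ Finset.Icc 1 I, ∑ j ∈ Finset.Icc 1 J, ∑ r ∈ Finset.Icc 1 (Kij i j),
          (c i j r : ℝ) * wstar i j r)
          = (∑ i ∈ Finset.Icc 1 I, ∑ j ∈ Finset.Icc 1 J, ∑ r ∈ Finset.Icc 1 (Kij i j),
            (c i j r : ℝ) * (∑ h ∈ Finset.Icc r (Kij i j), (1 : ℝ) / h) / (t i * s i j)) * zstar := by
        simp only [Finset.sum_mul]
        refine Finset.sum_congr rfl fun i _ => Finset.sum_congr rfl fun j _ =>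
          Finset.sum_congr rfl fun r _ => ?_
        rw [hwstar]; ring
      rw [heq, hzstar]
      field_simp
    · intro i j r
      rw [hwstar]
      have hts : 0 ≤ t i * s i j := le_of_lt (mul_pos (ht i) (hs i j))
      have hH : 0 ≤ ∑ h ∈ Finset.Icc r (Kij i j), (1 : ℝ) / h :=
        Finset.sum_nonneg fun h _ => by positivity
      exact div_nonneg (mul_nonneg hH (le_of_lt hzpos)) hts
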